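/- Let ψ : ℕ → ℝ be a nonnegative sequence with Σ_{k=1}^∞ k·ψ(k) < ∞, let β ∈ ℝ and n ∈ ℕ (n ≥ 1). Then Σ_{k=n}^∞ ψ(k) − (π/n)·Σ_{k=1}^∞ k·ψ(k+n) ≤ (1/2)·sup_{t∈ℝ} |Ψ_{β,n}(t + π/n) − Ψ_{β,n}(t)| ≤ Σ_{k=n}^∞ ψ(k). -/

import Mathlib

open MeasureTheory Real Filter

set_option maxHeartbeats 1000000

noncomputable section

/-- The kernel `Ψ_{β,n}(t) = Σ_{k=n}^∞ ψ(k) cos(k t - βπ/2)`. -/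
def PsiKerN (ψ : ℕ → ℝ) (β : ℝ) (n : ℕ) (t : ℝ) : ℝ :=
  ∑' k : ℕ, ψ (k + n) * Real.cos (((k + n : ℕ) : ℝ) * t - β * π / 2)

lemma cos_ge_one_sub_abs (x : ℝ) : 1 - |x| ≤ Real.cos x := by
  rcases le_or_gt (|x|) 2 with h | h
  · have h1 : x ^ 2 ≤ 2 * |x| := by nlinarith [sq_abs x, abs_nonneg x]
    have h2 : 1 - x ^ 2 / 2 ≤ Real.cos x := Real.one_sub_sq_div_two_le_cos
    linarith
  · nlinarith [Real.neg_one_le_cos x]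

lemma abs_neg_one_zpow' (m : ℤ) : |(-1 : ℝ) ^ m| = 1 := by
  rcases Int.even_or_odd m with h | h
  · rw [h.neg_one_zpow]; simp
  · rw [Odd.neg_one_zpow h]; simp

/-- Two-sided bound for `(1/2) ‖Ψ_{β,n}(· + π/n) - Ψ_{β,n}(·)‖_C`. -/
theorem PsiKerN_shift_norm_bounds (ψ : ℕ → ℝ) (hψ : ∀ k, 0 ≤ ψ k)
    (hsum : Summable (fun k : ℕ => (k : ℝ) * ψ k)) (β : ℝ) (n : ℕ) (hn : 1 ≤ n) :
    (∑' k : ℕ, ψ (k + n)) - (π / (n : ℝ)) * (∑' k : ℕ, ((k : ℝ) + 1) * ψ (k + 1 + n)) ≤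
        (1 / 2) * (⨆ t : ℝ, |PsiKerN ψ β n (t + π / (n : ℝ)) - PsiKerN ψ β n t|) ∧
      (1 / 2) * (⨆ t : ℝ, |PsiKerN ψ β n (t + π / (n : ℝ)) - PsiKerN ψ β n t|) ≤
        ∑' k : ℕ, ψ (k + n) := by
  have hπ : (0 : ℝ) < π := Real.pi_pos
  have hn0 : (0 : ℝ) < (n : ℝ) := by exact_mod_cast hn
  have hn' : (n : ℝ) ≠ 0 := ne_of_gt hn0
  -- summability facts
  have hSigShift : Summable (fun k : ℕ => ((k + n : ℕ) : ℝ) * ψ (k + n)) :=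
    (summable_nat_add_iff n).mpr hsum
  have hSigPsi : Summable (fun k : ℕ => ψ (k + n)) := by
    refine Summable.of_nonneg_of_le (fun k => hψ _) (fun k => ?_) hSigShift
    refine le_mul_of_one_le_left (hψ _) ?_
    have h1 : (1 : ℕ) ≤ k + n := le_add_left hn
    exact_mod_cast h1
  have hSigkPsi : Summable (fun k : ℕ => (k : ℝ) * ψ (k + n)) := by
    refine Summable.of_nonneg_of_le
      (fun k => mul_nonneg (Nat.cast_nonneg k) (hψ _)) (fun k => ?_) hSigShift
    refine mul_le_mul_of_nonneg_right ?_ (hψ _)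
    push_cast
    linarith [Nat.cast_nonneg (α := ℝ) n]
  have hsummf : ∀ t : ℝ, Summable
      (fun k : ℕ => ψ (k + n) * Real.cos (((k + n : ℕ) : ℝ) * t - β * π / 2)) := by
    intro t
    refine Summable.of_abs (Summable.of_nonneg_of_le (fun k => abs_nonneg _)
      (fun k => ?_) hSigPsi)
    rw [abs_mul, abs_of_nonneg (hψ _)]
    calc ψ (k + n) * |Real.cos (((k + n : ℕ) : ℝ) * t - β * π / 2)|
        ≤ ψ (k + n) * 1 := mul_le_mul_of_nonneg_left (Real.abs_cos_le_one _) (hψ _)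
      _ = ψ (k + n) := mul_one _
  -- the difference as a tsum
  have hD : ∀ t : ℝ, PsiKerN ψ β n (t + π / (n : ℝ)) - PsiKerN ψ β n t
      = ∑' k : ℕ, ψ (k + n) * (Real.cos (((k + n : ℕ) : ℝ) * (t + π / (n : ℝ)) - β * π / 2)
          - Real.cos (((k + n : ℕ) : ℝ) * t - β * π / 2)) := by
    intro t
    simp only [mul_sub]
    rw [Summable.tsum_sub (hsummf _) (hsummf _)]
    rfl
  -- a two-bound on each cosine difference
  have hcos2 : ∀ t : ℝ, ∀ k : ℕ,
      |Real.cos (((k + n : ℕ) : ℝ) * (t + π / (n : ℝ)) - β * π / 2)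
        - Real.cos (((k + n : ℕ) : ℝ) * t - β * π / 2)| ≤ 2 := by
    intro t k
    have h1 := Real.abs_cos_le_one (((k + n : ℕ) : ℝ) * (t + π / (n : ℝ)) - β * π / 2)
    have h2 := Real.abs_cos_le_one (((k + n : ℕ) : ℝ) * t - β * π / 2)
    calc _ ≤ _ := abs_sub _ _
      _ ≤ (2 : ℝ) := by linarith
  have habsterm : ∀ t : ℝ, ∀ k : ℕ,
      |ψ (k + n) * (Real.cos (((k + n : ℕ) : ℝ) * (t + π / (n : ℝ)) - β * π / 2)
        - Real.cos (((k + n : ℕ) : ℝ) * t - β * π / 2))| ≤ 2 * ψ (k + n) := by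
    intro t k
    rw [abs_mul, abs_of_nonneg (hψ _)]
    nlinarith [hψ (k + n), hcos2 t k, abs_nonneg (Real.cos (((k + n : ℕ) : ℝ) * (t + π / (n : ℝ)) - β * π / 2)
        - Real.cos (((k + n : ℕ) : ℝ) * t - β * π / 2))]
  have hsumabs : ∀ t : ℝ, Summable (fun k : ℕ =>
      |ψ (k + n) * (Real.cos (((k + n : ℕ) : ℝ) * (t + π / (n : ℝ)) - β * π / 2)
        - Real.cos (((k + n : ℕ) : ℝ) * t - β * π / 2))|) := fun t =>
    Summable.of_nonneg_of_le (fun k => abs_nonneg _) (fun k => habsterm t k) (hSigPsi.mul_left 2)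
  -- uniform upper bound on the difference
  have habs : ∀ t : ℝ, |PsiKerN ψ β n (t + π / (n : ℝ)) - PsiKerN ψ β n t|
      ≤ 2 * ∑' k : ℕ, ψ (k + n) := by
    intro t
    rw [hD t]
    have h1 : |∑' k : ℕ, ψ (k + n) *
        (Real.cos (((k + n : ℕ) : ℝ) * (t + π / (n : ℝ)) - β * π / 2)
          - Real.cos (((k + n : ℕ) : ℝ) * t - β * π / 2))|
        ≤ ∑' k : ℕ, |ψ (k + n) *
        (Real.cos (((k + n : ℕ) : ℝ) * (t + π / (n : ℝ)) - β * π / 2)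
          - Real.cos (((k + n : ℕ) : ℝ) * t - β * π / 2))| := by
      have h2 := norm_tsum_le_tsum_norm (f := fun k : ℕ => ψ (k + n) *
        (Real.cos (((k + n : ℕ) : ℝ) * (t + π / (n : ℝ)) - β * π / 2)
          - Real.cos (((k + n : ℕ) : ℝ) * t - β * π / 2)))
        (by simpa only [Real.norm_eq_abs] using hsumabs t)
      simpa only [Real.norm_eq_abs] using h2
    refine h1.trans ?_
    rw [show (2 : ℝ) * ∑' k : ℕ, ψ (k + n) = ∑' k : ℕ, 2 * ψ (k + n) from (tsum_mul_left).symm]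
    exact Summable.tsum_le_tsum (fun k => habsterm t k) (hsumabs t) (hSigPsi.mul_left 2)
  have hSigPsi0 : (0 : ℝ) ≤ ∑' k : ℕ, ψ (k + n) := tsum_nonneg fun k => hψ _
  have hsup_le : (⨆ t : ℝ, |PsiKerN ψ β n (t + π / (n : ℝ)) - PsiKerN ψ β n t|)
      ≤ 2 * ∑' k : ℕ, ψ (k + n) := Real.iSup_le habs (by linarith)
  have hbdd : BddAbove (Set.range fun t : ℝ =>
      |PsiKerN ψ β n (t + π / (n : ℝ)) - PsiKerN ψ β n t|) := by
    refine ⟨2 * ∑' k : ℕ, ψ (k + n), ?_⟩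
    rintro x ⟨t, rfl⟩
    exact habs t
  constructor
  · -- lower bound
    set m : ℤ := ⌈β * π / 2 / π⌉ with hm
    set t₀ : ℝ := (β * π / 2 - (m : ℝ) * π) / n with ht₀
    have hm1 : β * π / 2 - (m : ℝ) * π ≤ 0 := by
      have h1 : β * π / 2 / π ≤ (m : ℝ) := Int.le_ceil _
      have h2 := (div_le_iff₀ hπ).mp h1
      linarith
    have hm2 : -π ≤ β * π / 2 - (m : ℝ) * π := by
      have h1 : (m : ℝ) < β * π / 2 / π + 1 := Int.ceil_lt_add_one _
      have h2 : (m : ℝ) * π < (β * π / 2 / π + 1) * π := mul_lt_mul_of_pos_right h1 hπ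
      have h3 : (β * π / 2 / π + 1) * π = β * π / 2 + π := by field_simp
      rw [h3] at h2
      linarith
    have ht0b : t₀ ≤ 0 := div_nonpos_of_nonpos_of_nonneg hm1 (le_of_lt hn0)
    have ht0a : -(π / (n : ℝ)) ≤ t₀ := by
      rw [show -(π / (n : ℝ)) = -π / (n : ℝ) from (neg_div _ _).symm, ht₀]
      exact (div_le_div_iff_of_pos_right hn0).mpr hm2
    have hnt : (n : ℝ) * t₀ = β * π / 2 - (m : ℝ) * π := by
      rw [ht₀]; field_simp
    have hπn : (n : ℝ) * (π / (n : ℝ)) = π := by field_simp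
    -- exact value of the difference at t₀
    have hterm : ∀ k : ℕ,
        ψ (k + n) * (Real.cos (((k + n : ℕ) : ℝ) * (t₀ + π / (n : ℝ)) - β * π / 2)
          - Real.cos (((k + n : ℕ) : ℝ) * t₀ - β * π / 2))
        = (-1 : ℝ) ^ (m - 1) * (ψ (k + n) *
            (Real.cos ((k : ℝ) * (t₀ + π / (n : ℝ))) + Real.cos ((k : ℝ) * t₀))) := by
      intro k
      have e1 : ((k + n : ℕ) : ℝ) * t₀ - β * π / 2 = (k : ℝ) * t₀ - (m : ℝ) * π := by
        push_cast
        linear_combination hnt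
      have e2 : ((k + n : ℕ) : ℝ) * (t₀ + π / (n : ℝ)) - β * π / 2
          = (k : ℝ) * (t₀ + π / (n : ℝ)) - ((m - 1 : ℤ) : ℝ) * π := by
        push_cast
        linear_combination hnt + hπn
      rw [e1, e2, Real.cos_sub_int_mul_pi, Real.cos_sub_int_mul_pi]
      have hpow : ((-1 : ℝ)) ^ m = -((-1 : ℝ)) ^ (m - 1) := by
        have h := zpow_add_one₀ (by norm_num : (-1 : ℝ) ≠ 0) (m - 1)
        rw [sub_add_cancel] at h
        rw [h]; ring
      rw [hpow]; ring
    have hSsummable : Summable (fun k : ℕ => ψ (k + n) *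
        (Real.cos ((k : ℝ) * (t₀ + π / (n : ℝ))) + Real.cos ((k : ℝ) * t₀))) := by
      refine Summable.of_abs (Summable.of_nonneg_of_le (fun k => abs_nonneg _)
        (fun k => ?_) (hSigPsi.mul_left 2))
      rw [abs_mul, abs_of_nonneg (hψ _)]
      have h1 := Real.abs_cos_le_one ((k : ℝ) * (t₀ + π / (n : ℝ)))
      have h2 := Real.abs_cos_le_one ((k : ℝ) * t₀)
      have h3 : |Real.cos ((k : ℝ) * (t₀ + π / (n : ℝ))) + Real.cos ((k : ℝ) * t₀)| ≤ 2 := by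
        calc _ ≤ _ := abs_add_le _ _
          _ ≤ (2 : ℝ) := by linarith
      nlinarith [hψ (k + n), abs_nonneg (Real.cos ((k : ℝ) * (t₀ + π / (n : ℝ))) + Real.cos ((k : ℝ) * t₀))]
    have hDt₀ : PsiKerN ψ β n (t₀ + π / (n : ℝ)) - PsiKerN ψ β n t₀
        = (-1 : ℝ) ^ (m - 1) * ∑' k : ℕ, ψ (k + n) *
            (Real.cos ((k : ℝ) * (t₀ + π / (n : ℝ))) + Real.cos ((k : ℝ) * t₀)) := by
      rw [hD t₀, tsum_congr hterm, tsum_mul_left]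
    have habsD : |PsiKerN ψ β n (t₀ + π / (n : ℝ)) - PsiKerN ψ β n t₀|
        = |∑' k : ℕ, ψ (k + n) *
            (Real.cos ((k : ℝ) * (t₀ + π / (n : ℝ))) + Real.cos ((k : ℝ) * t₀))| := by
      rw [hDt₀, abs_mul, abs_neg_one_zpow', one_mul]
    -- termwise lower bound
    have hc1 : ∀ k : ℕ, 1 - (k : ℝ) * (π / (n : ℝ)) ≤ Real.cos ((k : ℝ) * t₀) := by
      intro k
      refine le_trans ?_ (cos_ge_one_sub_abs _)
      have hab : |(k : ℝ) * t₀| ≤ (k : ℝ) * (π / (n : ℝ)) := by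
        rw [abs_mul, Nat.abs_cast]
        refine mul_le_mul_of_nonneg_left ?_ (Nat.cast_nonneg k)
        rw [abs_of_nonpos ht0b]
        linarith
      linarith
    have hc2 : ∀ k : ℕ, 1 - (k : ℝ) * (π / (n : ℝ))
        ≤ Real.cos ((k : ℝ) * (t₀ + π / (n : ℝ))) := by
      intro k
      refine le_trans ?_ (cos_ge_one_sub_abs _)
      have hab : |(k : ℝ) * (t₀ + π / (n : ℝ))| ≤ (k : ℝ) * (π / (n : ℝ)) := by
        rw [abs_mul, Nat.abs_cast]
        refine mul_le_mul_of_nonneg_left ?_ (Nat.cast_nonneg k)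
        rw [abs_of_nonneg (by linarith : (0 : ℝ) ≤ t₀ + π / (n : ℝ))]
        linarith
      linarith
    have hlow : ∀ k : ℕ, 2 * ψ (k + n) - (2 * (π / (n : ℝ))) * ((k : ℝ) * ψ (k + n))
        ≤ ψ (k + n) * (Real.cos ((k : ℝ) * (t₀ + π / (n : ℝ))) + Real.cos ((k : ℝ) * t₀)) := by
      intro k
      have h := mul_le_mul_of_nonneg_left
        (show 2 - 2 * ((k : ℝ) * (π / (n : ℝ)))
            ≤ Real.cos ((k : ℝ) * (t₀ + π / (n : ℝ))) + Real.cos ((k : ℝ) * t₀) by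
          linarith [hc1 k, hc2 k]) (hψ (k + n))
      calc 2 * ψ (k + n) - (2 * (π / (n : ℝ))) * ((k : ℝ) * ψ (k + n))
          = ψ (k + n) * (2 - 2 * ((k : ℝ) * (π / (n : ℝ)))) := by ring
        _ ≤ _ := h
    have hglow : Summable (fun k : ℕ =>
        2 * ψ (k + n) - (2 * (π / (n : ℝ))) * ((k : ℝ) * ψ (k + n))) :=
      (hSigPsi.mul_left 2).sub (hSigkPsi.mul_left _)
    have hSlow : (∑' k : ℕ, (2 * ψ (k + n) - (2 * (π / (n : ℝ))) * ((k : ℝ) * ψ (k + n))))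
        ≤ ∑' k : ℕ, ψ (k + n) *
            (Real.cos ((k : ℝ) * (t₀ + π / (n : ℝ))) + Real.cos ((k : ℝ) * t₀)) :=
      Summable.tsum_le_tsum hlow hglow hSsummable
    have hsplit : (∑' k : ℕ, (2 * ψ (k + n) - (2 * (π / (n : ℝ))) * ((k : ℝ) * ψ (k + n))))
        = 2 * (∑' k : ℕ, ψ (k + n))
          - (2 * (π / (n : ℝ))) * ∑' k : ℕ, (k : ℝ) * ψ (k + n) := by
      rw [Summable.tsum_sub (hSigPsi.mul_left 2) (hSigkPsi.mul_left _), tsum_mul_left, tsum_mul_left]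
    -- reindexing
    have hre : (∑' k : ℕ, (k : ℝ) * ψ (k + n)) = ∑' k : ℕ, ((k : ℝ) + 1) * ψ (k + 1 + n) := by
      rw [Summable.tsum_eq_zero_add hSigkPsi]
      push_cast
      rw [zero_mul, zero_add]
    rw [← hre]
    have hle2 : |PsiKerN ψ β n (t₀ + π / (n : ℝ)) - PsiKerN ψ β n t₀|
        ≤ ⨆ t : ℝ, |PsiKerN ψ β n (t + π / (n : ℝ)) - PsiKerN ψ β n t| := le_ciSup hbdd t₀
    have hle1 := le_abs_self (∑' k : ℕ, ψ (k + n) *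
        (Real.cos ((k : ℝ) * (t₀ + π / (n : ℝ))) + Real.cos ((k : ℝ) * t₀)))
    calc (∑' k : ℕ, ψ (k + n)) - π / (n : ℝ) * ∑' k : ℕ, (k : ℝ) * ψ (k + n)
        = (1 / 2) * (2 * (∑' k : ℕ, ψ (k + n))
            - (2 * (π / (n : ℝ))) * ∑' k : ℕ, (k : ℝ) * ψ (k + n)) := by ring
      _ ≤ (1 / 2) * |PsiKerN ψ β n (t₀ + π / (n : ℝ)) - PsiKerN ψ β n t₀| := by
          rw [habsD]; linarith [hsplit ▸ hSlow]
      _ ≤ (1 / 2) * ⨆ t : ℝ, |PsiKerN ψ β n (t + π / (n : ℝ)) - PsiKerN ψ β n t| := by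
          linarith [hle2]
  · -- upper bound
    linarith
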